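/- arXiv:1210.1439 — 2 statements merged into one kernel-verified Lean document; each statement's English description precedes it below -/
import Mathlib

section
/- Let p be a prime number and let t be a real number with |t| < p. Define S(t) = ∑_{n odd, n≥1} ζ(n+1) t^{n+1} / p^n and D(t) = (p − 2S(t))² + (π t)². Then D(t) ≠ 0 and exp(−2πit/p) = (1 − 2π²t²/D(t)) + i · (2πt(2S(t) − p)/D(t)). -/
open Real

/-- `S p t = ∑_{n odd, n ≥ 1} ζ(n+1) t^(n+1) / p^n`, the sum over odd `n = 2k+1`. -/
noncomputable def S (p : ℕ) (t : ℝ) : ℝ :=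
  ∑' k : ℕ, (riemannZeta (2 * k + 2)).re * t ^ (2 * k + 2) / (p : ℝ) ^ (2 * k + 1)

/-- `D p t = (p - 2 S(t))² + (π t)²`. -/
noncomputable def D (p : ℕ) (t : ℝ) : ℝ :=
  ((p : ℝ) - 2 * S p t) ^ 2 + (Real.pi * t) ^ 2

/- ### Auxiliary material -/

/-- The basic partial-fraction sum `F x = ∑_{n ≥ 1} x² / (n² - x²)`. -/
noncomputable def Faux (x : ℝ) : ℝ := ∑' n : ℕ, x ^ 2 / (((n : ℝ) + 1) ^ 2 - x ^ 2)

lemma summable_base : Summable (fun k : ℕ => 1 / ((k : ℝ) + 1) ^ 2) := by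
  have h := (summable_nat_add_iff (f := fun n : ℕ => 1 / (n : ℝ) ^ 2) 1).mpr
    (summable_one_div_nat_pow.mpr one_lt_two)
  refine h.congr fun k => ?_
  push_cast
  ring

lemma denom_pos {x : ℝ} (hx : |x| < 1) (k : ℕ) : 0 < ((k : ℝ) + 1) ^ 2 - x ^ 2 := by
  have h1 : x ^ 2 < 1 := by nlinarith [abs_nonneg x, sq_abs x]
  have h2 : (1 : ℝ) ≤ ((k : ℝ) + 1) ^ 2 := by nlinarith [Nat.cast_nonneg (α := ℝ) k]
  linarith

lemma denom_lb {x : ℝ} (hx : |x| < 1) (k : ℕ) :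
    ((k : ℝ) + 1) ^ 2 * (1 - x ^ 2) ≤ ((k : ℝ) + 1) ^ 2 - x ^ 2 := by
  have h2 : (1 : ℝ) ≤ ((k : ℝ) + 1) ^ 2 := by nlinarith [Nat.cast_nonneg (α := ℝ) k]
  nlinarith [sq_nonneg x]

lemma summable_aux {x : ℝ} (hx : |x| < 1) (C : ℝ) :
    Summable (fun k : ℕ => C / (((k : ℝ) + 1) ^ 2 - x ^ 2)) := by
  have h1 : (0 : ℝ) < 1 - x ^ 2 := by nlinarith [abs_nonneg x, sq_abs x]
  refine Summable.of_norm_bounded (g := fun k => (|C| / (1 - x ^ 2)) * (1 / ((k : ℝ) + 1) ^ 2))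
    (summable_base.mul_left _) (fun k => ?_)
  have hd := denom_pos hx k
  have hlb := denom_lb hx k
  have hk1 : (0 : ℝ) < ((k : ℝ) + 1) ^ 2 := by positivity
  rw [Real.norm_eq_abs, abs_div, abs_of_pos hd, div_le_iff₀ hd]
  have h2 : (|C| / (1 - x ^ 2)) * (1 / ((k : ℝ) + 1) ^ 2) * (((k : ℝ) + 1) ^ 2 * (1 - x ^ 2))
      = |C| := by
    field_simp
    try left
    try ring
  nlinarith [mul_le_mul_of_nonneg_left hlb
    (by positivity : (0:ℝ) ≤ (|C| / (1 - x ^ 2)) * (1 / ((k : ℝ) + 1) ^ 2)), abs_nonneg C,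
    mul_pos hk1 h1]

lemma hasSum_Faux {x : ℝ} (hx : |x| < 1) :
    HasSum (fun k : ℕ => x ^ 2 / (((k : ℝ) + 1) ^ 2 - x ^ 2)) (Faux x) :=
  (summable_aux hx (x ^ 2)).hasSum

lemma ne_int {x : ℝ} (hx0 : x ≠ 0) (hx : |x| < 1) (m : ℤ) : x ≠ (m : ℝ) := by
  intro h
  rcases eq_or_ne m 0 with rfl | hm
  · exact hx0 (by simpa using h)
  · have h1 : (1 : ℝ) ≤ |(m : ℝ)| := by
      have := Int.one_le_abs hm
      calc (1 : ℝ) = ((1 : ℤ) : ℝ) := by norm_num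
        _ ≤ ((|m| : ℤ) : ℝ) := by exact_mod_cast this
        _ = |(m : ℝ)| := by push_cast; ring
    rw [← h] at h1
    linarith

lemma integral_cexp_half {r : ℝ} (hr : r ≠ 0) :
    ∫ θ in (-(1/2) : ℝ)..(1/2 : ℝ), Complex.exp (2 * π * r * Complex.I * θ) =
      ((Real.sin (π * r) / (π * r) : ℝ) : ℂ) := by
  have hc : (2 * (π : ℂ) * r * Complex.I) ≠ 0 := by
    simp [Real.pi_ne_zero, hr, Complex.ofReal_ne_zero, Complex.I_ne_zero]
  have h := integral_exp_mul_complex (a := -(1/2)) (b := 1/2) hc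
  rw [show (∫ θ in (-(1/2) : ℝ)..(1/2 : ℝ), Complex.exp (2 * π * r * Complex.I * θ))
      = ∫ θ in (-(1/2) : ℝ)..(1/2 : ℝ), Complex.exp ((2 * (π:ℂ) * r * Complex.I) * θ) by
    apply intervalIntegral.integral_congr; intro θ _; norm_num]
  rw [h]
  have e1 : (2 * (π:ℂ) * r * Complex.I) * (((1:ℝ)/2 : ℝ) : ℂ) = ((π * r : ℝ) : ℂ) * Complex.I := by
    push_cast; ring
  have e2 : (2 * (π:ℂ) * r * Complex.I) * ((-(1/2) : ℝ) : ℂ) = ((-(π * r) : ℝ) : ℂ) * Complex.I := by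
    push_cast; ring
  have hπr : ((π * r : ℝ) : ℂ) ≠ 0 := by
    simp [Complex.ofReal_ne_zero, Real.pi_ne_zero, hr]
  rw [e1, e2, Complex.exp_mul_I, Complex.exp_mul_I, Complex.ofReal_neg, Complex.cos_neg,
    Complex.sin_neg, ← Complex.ofReal_sin, ← Complex.ofReal_cos]
  rw [Complex.ofReal_div, div_eq_div_iff hc hπr]
  push_cast
  ring

lemma coeff_eq (x : ℝ) (n : ℤ) :
    haveI : Fact (0 < (1:ℝ)) := ⟨one_pos⟩
    fourierCoeff (AddCircle.liftIco 1 (-(1/2)) (fun θ : ℝ => Complex.cos (2 * π * x * θ))) n =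
      (1/2 : ℂ) * ((∫ θ in (-(1/2) : ℝ)..(1/2 : ℝ), Complex.exp (2 * π * (x - n) * Complex.I * θ))
        + ∫ θ in (-(1/2) : ℝ)..(1/2 : ℝ), Complex.exp (2 * π * (-(x + n)) * Complex.I * θ)) := by
  haveI : Fact (0 < (1:ℝ)) := ⟨one_pos⟩
  rw [fourierCoeff_liftIco_eq, fourierCoeffOn_eq_integral]
  rw [show (-(1/2) : ℝ) + 1 - -(1/2) = 1 by ring]
  rw [show (-(1/2) : ℝ) + 1 = 1/2 by norm_num]
  have hInt : ∀ θ : ℝ,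
      Complex.exp (2 * ↑π * Complex.I * ↑(-n) * ↑θ / ↑(1:ℝ)) • Complex.cos (2 * ↑π * ↑x * ↑θ)
      = (Complex.exp (2 * π * (x - n) * Complex.I * θ)
          + Complex.exp (2 * π * (-(x + n)) * Complex.I * θ)) / 2 := by
    intro θ
    rw [smul_eq_mul, Complex.cos, ← mul_div_assoc, mul_add, ← Complex.exp_add, ← Complex.exp_add]
    congr 3 <;> push_cast <;> ring
  simp only [fourier_coe_apply]
  rw [intervalIntegral.integral_congr (g := fun θ : ℝ =>
      (Complex.exp (2 * π * (x - n) * Complex.I * θ)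
        + Complex.exp (2 * π * (-(x + n)) * Complex.I * θ)) / 2) (fun θ _ => hInt θ)]
  have h1 : IntervalIntegrable (fun θ : ℝ => Complex.exp (2 * π * (x - n) * Complex.I * θ))
      MeasureTheory.volume (-(1/2)) (1/2) := (Continuous.intervalIntegrable (by fun_prop) _ _)
  have h2 : IntervalIntegrable (fun θ : ℝ => Complex.exp (2 * π * (-(x + n)) * Complex.I * θ))
      MeasureTheory.volume (-(1/2)) (1/2) := (Continuous.intervalIntegrable (by fun_prop) _ _)
  rw [intervalIntegral.integral_div, intervalIntegral.integral_add h1 h2]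
  simp [smul_eq_mul]
  ring

lemma coeff_val {x : ℝ} (hx0 : x ≠ 0) (hx : |x| < 1) (n : ℤ) :
    haveI : Fact (0 < (1:ℝ)) := ⟨one_pos⟩
    fourierCoeff (AddCircle.liftIco 1 (-(1/2)) (fun θ : ℝ => Complex.cos (2 * π * x * θ))) n =
      (((-1 : ℝ) ^ n * (Real.sin (π * x) * x / (π * (x ^ 2 - (n : ℝ) ^ 2))) : ℝ) : ℂ) := by
  have hxn : x - (n : ℝ) ≠ 0 := sub_ne_zero.mpr (ne_int hx0 hx n)
  have hxn' : x + (n : ℝ) ≠ 0 := by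
    have := sub_ne_zero.mpr (ne_int hx0 hx (-n))
    push_cast at this
    intro h; apply this; linarith
  have hxn2 : -(x + (n : ℝ)) ≠ 0 := neg_ne_zero.mpr hxn'
  have i1 : (∫ θ in (-(1/2) : ℝ)..(1/2 : ℝ),
      Complex.exp (2 * π * ((x:ℂ) - (n:ℂ)) * Complex.I * θ))
      = ((Real.sin (π * (x - n)) / (π * (x - n)) : ℝ) : ℂ) := by
    rw [← integral_cexp_half hxn]
    apply intervalIntegral.integral_congr; intro θ _; push_cast; ring_nf
  have i2 : (∫ θ in (-(1/2) : ℝ)..(1/2 : ℝ),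
      Complex.exp (2 * π * (-((x:ℂ) + (n:ℂ))) * Complex.I * θ))
      = ((Real.sin (π * (-(x + n))) / (π * (-(x + n))) : ℝ) : ℂ) := by
    rw [← integral_cexp_half hxn2]
    apply intervalIntegral.integral_congr; intro θ _; push_cast; ring_nf
  rw [coeff_eq, i1, i2]
  have hs1 : Real.sin (π * (x - (n : ℝ))) = (-1 : ℝ) ^ n * Real.sin (π * x) := by
    have h := Real.sin_int_mul_pi_sub (π * x) n
    rw [show π * (x - (n : ℝ)) = -((n : ℝ) * π - π * x) by ring, Real.sin_neg, h]; ring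
  have hs2 : Real.sin (π * (-(x + (n : ℝ)))) = -((-1 : ℝ) ^ n * Real.sin (π * x)) := by
    have h := Real.sin_int_mul_pi_sub (-(π * x)) n
    rw [show π * (-(x + (n : ℝ))) = -((n : ℝ) * π - (-(π * x))) by ring, Real.sin_neg, h,
      Real.sin_neg]; ring
  have e2 : Real.sin (π * (-(x + (n : ℝ)))) / (π * (-(x + (n : ℝ))))
      = ((-1 : ℝ) ^ n * Real.sin (π * x)) / (π * (x + (n : ℝ))) := by
    rw [hs2, mul_neg, neg_div_neg_eq]
  have hx2n2 : x ^ 2 - (n : ℝ) ^ 2 ≠ 0 := by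
    have h : x ^ 2 - (n : ℝ) ^ 2 = (x - n) * (x + n) := by ring
    rw [h]; exact mul_ne_zero hxn hxn'
  rw [hs1, e2]
  rw [show (1/2 : ℂ) = ((1/2 : ℝ) : ℂ) by norm_num, ← Complex.ofReal_add, ← Complex.ofReal_mul]
  congr 1
  have hπ := Real.pi_ne_zero
  field_simp
  ring

lemma hasSum_E {x : ℝ} (hx0 : x ≠ 0) (hx : |x| < 1) :
    HasSum (fun n : ℤ => Real.sin (π * x) * x / (π * (x ^ 2 - (n : ℝ) ^ 2)))
      (Real.cos (π * x)) := by
  haveI : Fact (0 < (1:ℝ)) := ⟨one_pos⟩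
  set g : ℝ → ℂ := fun θ : ℝ => Complex.cos (2 * π * x * θ) with hg
  have hend : g (-(1/2)) = g (-(1/2) + 1) := by
    simp only [hg]
    rw [show ((2:ℂ) * π * x * ((-(1/2) : ℝ) : ℂ)) = -((2:ℂ) * π * x * (((-(1/2) : ℝ) + 1 : ℝ) : ℂ))
      by push_cast; ring, Complex.cos_neg]
  set f : C(AddCircle 1, ℂ) :=
    ⟨AddCircle.liftIco 1 (-(1/2)) g, AddCircle.liftIco_continuous hend (by fun_prop)⟩ with hf
  set e : ℤ → ℝ := fun n => Real.sin (π * x) * x / (π * (x ^ 2 - (n : ℝ) ^ 2)) with he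
  have hcv : ∀ n : ℤ, fourierCoeff (⇑f) n = (((-1 : ℝ) ^ n * e n : ℝ) : ℂ) := fun n =>
    coeff_val hx0 hx n
  -- summability of coefficients
  have hbnd : ∀ (n : ℤ) (k : ℕ), (n : ℝ) ^ 2 = ((k : ℝ) + 1) ^ 2 →
      ‖((-1 : ℝ) ^ n * e n : ℝ)‖ ≤ (|Real.sin (π * x) * x| / π) / (((k : ℝ) + 1) ^ 2 - x ^ 2) := by
    intro n k hk
    have hd := denom_pos hx k
    have habs : |(-1 : ℝ) ^ n| = 1 := by
      rcases Int.even_or_odd n with h | h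
      · rw [h.neg_one_zpow]; norm_num
      · rw [Odd.neg_one_zpow h]; norm_num
    rw [Real.norm_eq_abs, abs_mul, habs, one_mul, he]
    simp only
    rw [abs_div, hk, abs_mul π (x ^ 2 - ((k : ℝ) + 1) ^ 2), abs_of_pos Real.pi_pos,
      abs_sub_comm (x ^ 2) (((k : ℝ) + 1) ^ 2), abs_of_pos hd, div_div]
  have hsum : Summable (fourierCoeff (⇑f)) := by
    rw [show fourierCoeff (⇑f) = fun n : ℤ => (((-1 : ℝ) ^ n * e n : ℝ) : ℂ) from funext hcv]
    rw [Complex.summable_ofReal]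
    apply Summable.of_nat_of_neg_add_one
    · rw [← summable_nat_add_iff 1]
      apply Summable.of_norm_bounded (summable_aux hx (|Real.sin (π * x) * x| / π))
      intro k
      exact hbnd ((k : ℤ) + 1) k (by push_cast; ring)
    · apply Summable.of_norm_bounded (summable_aux hx (|Real.sin (π * x) * x| / π))
      intro k
      exact hbnd (-((k : ℤ) + 1)) k (by push_cast; ring)
  have hpt := has_pointwise_sum_fourier_series_of_summable hsum ((-(1/2) : ℝ) : AddCircle (1:ℝ))
  have hfval : f ((-(1/2) : ℝ) : AddCircle (1:ℝ)) = ((Real.cos (π * x) : ℝ) : ℂ) := by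
    show AddCircle.liftIco 1 (-(1/2)) g ((-(1/2) : ℝ) : AddCircle (1:ℝ)) = _
    rw [AddCircle.liftIco_coe_apply (by norm_num)]
    simp only [hg]
    rw [show ((2:ℂ) * π * x * ((-(1/2) : ℝ) : ℂ)) = ((-(π * x) : ℝ) : ℂ) by push_cast; ring,
      ← Complex.ofReal_cos, Real.cos_neg]
  have hfour : ∀ n : ℤ, (fourier n) ((-(1/2) : ℝ) : AddCircle (1:ℝ)) = (-1 : ℂ) ^ n := by
    intro n
    rw [fourier_coe_apply]
    rw [show (2 * (π:ℂ) * Complex.I * (n:ℂ) * ((-(1/2):ℝ):ℂ) / ((1:ℝ):ℂ))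
        = (n : ℂ) * (-((π:ℂ) * Complex.I)) by push_cast; ring]
    rw [Complex.exp_int_mul, Complex.exp_neg, Complex.exp_pi_mul_I]
    norm_num
  have hterm : ∀ n : ℤ, fourierCoeff (⇑f) n • (fourier n) ((-(1/2) : ℝ) : AddCircle (1:ℝ))
      = ((e n : ℝ) : ℂ) := by
    intro n
    rw [hcv n, hfour n, smul_eq_mul, Complex.ofReal_mul, Complex.ofReal_zpow]
    push_cast
    rw [mul_comm, ← mul_assoc, ← mul_zpow]
    norm_num
  rw [hfval] at hpt
  rw [show (fun n : ℤ => fourierCoeff (⇑f) n • (fourier n) ((-(1/2) : ℝ) : AddCircle (1:ℝ)))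
      = fun n : ℤ => ((e n : ℝ) : ℂ) from funext hterm] at hpt
  exact Complex.hasSum_ofReal.mp hpt

/-- The cotangent partial fraction identity, in product form. -/
lemma key_cot {x : ℝ} (hx : |x| < 1) :
    π * x * Real.cos (π * x) = Real.sin (π * x) * (1 - 2 * Faux x) := by
  rcases eq_or_ne x 0 with rfl | hx0
  · simp
  have hE := hasSum_E hx0 hx
  set e : ℤ → ℝ := fun n => Real.sin (π * x) * x / (π * (x ^ 2 - (n : ℝ) ^ 2)) with he
  have hπ := Real.pi_ne_zero
  -- sum of the shifted series
  have hA : HasSum (fun k : ℕ => e ((k : ℤ) + 1))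
      (-(Real.sin (π * x) / (π * x)) * Faux x) := by
    have h := (hasSum_Faux hx).mul_left (-(Real.sin (π * x) / (π * x)))
    refine h.congr_fun fun k => ?_
    have hd := (denom_pos hx k).ne'
    have hd2 : x ^ 2 - ((k : ℝ) + 1) ^ 2 ≠ 0 := fun hcon => hd (by linarith)
    simp only [he]
    push_cast
    field_simp
    ring
  have hA' : HasSum (fun k : ℕ => e ((k + 1 : ℕ) : ℤ))
      (-(Real.sin (π * x) / (π * x)) * Faux x) := by
    have heq : (fun k : ℕ => e ((k + 1 : ℕ) : ℤ)) = (fun k : ℕ => e ((k : ℤ) + 1)) := by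
      funext k; norm_num
    rw [heq]; exact hA
  have h1 := (hasSum_nat_add_iff (f := fun k : ℕ => e (k : ℤ)) 1).mp hA'
  have hneg : HasSum (fun k : ℕ => e (-((k : ℤ) + 1)))
      (-(Real.sin (π * x) / (π * x)) * Faux x) := by
    have heq : (fun k : ℕ => e (-((k : ℤ) + 1))) = (fun k : ℕ => e ((k : ℤ) + 1)) := by
      funext k
      simp only [he]
      congr 1
      push_cast
      ring
    rw [heq]; exact hA
  have htot := h1.of_nat_of_neg_add_one hneg
  have hval := hE.unique htot
  simp only [Finset.range_one, Finset.sum_singleton, Nat.cast_zero] at hval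
  have he0 : e (0 : ℤ) = Real.sin (π * x) / (π * x) := by
    simp only [he]
    push_cast
    rw [show x ^ 2 - 0 ^ 2 = x * x by ring]
    field_simp
  rw [he0] at hval
  rw [hval]
  field_simp
  ring

lemma zeta_re_eq (k : ℕ) :
    (riemannZeta (2 * k + 2)).re = ∑' n : ℕ, 1 / (n : ℝ) ^ (2 * k + 2) := by
  have h : ((2 * k + 2 : ℕ) : ℂ) = 2 * (k : ℂ) + 2 := by push_cast; ring
  rw [← h, zeta_nat_eq_tsum_of_gt_one (by omega)]
  rw [show (∑' n : ℕ, 1 / (n : ℂ) ^ (2 * k + 2))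
      = ((∑' n : ℕ, 1 / (n : ℝ) ^ (2 * k + 2) : ℝ) : ℂ) by
    rw [Complex.ofReal_tsum]; push_cast; rfl]
  exact Complex.ofReal_re _

lemma zeta_re_le (k : ℕ) :
    (riemannZeta (2 * k + 2)).re ≤ ∑' n : ℕ, 1 / (n : ℝ) ^ 2 := by
  rw [zeta_re_eq]
  have hsum2 : Summable (fun n : ℕ => 1 / (n : ℝ) ^ 2) := summable_one_div_nat_pow.mpr one_lt_two
  have hsumk : Summable (fun n : ℕ => 1 / (n : ℝ) ^ (2 * k + 2)) :=
    summable_one_div_nat_pow.mpr (by omega)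
  refine Summable.tsum_le_tsum (fun n => ?_) hsumk hsum2
  rcases Nat.eq_zero_or_pos n with rfl | hn
  · simp
  · have h1 : (1 : ℝ) ≤ (n : ℝ) := by exact_mod_cast hn
    apply one_div_le_one_div_of_le (by positivity)
    calc ((n : ℝ)) ^ 2 ≤ (n : ℝ) ^ (2 * k + 2) := pow_le_pow_right₀ h1 (by omega)
      _ = (n:ℝ) ^ (2 * k + 2) := rfl

lemma S_eq {p : ℕ} (hp : 0 < p) {t : ℝ} (ht : |t| < (p : ℝ)) :
    S p t = (p : ℝ) * Faux (t / p) := by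
  have hp' : (0 : ℝ) < p := by exact_mod_cast hp
  set x : ℝ := t / p with hxdef
  have hx : |x| < 1 := by
    rw [hxdef, abs_div, abs_of_pos hp', div_lt_one hp']
    exact ht
  have hx2 : x ^ 2 < 1 := by nlinarith [abs_nonneg x, sq_abs x]
  have hx2' : (0:ℝ) ≤ x ^ 2 := sq_nonneg x
  set a : ℕ → ℕ → ℝ := fun k n => 1 / (n : ℝ) ^ (2 * k + 2) * (t ^ (2 * k + 2) / (p : ℝ) ^ (2 * k + 1))
    with ha
  have hanonneg : ∀ k n, 0 ≤ a k n := by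
    intro k n
    apply mul_nonneg
    · positivity
    · apply div_nonneg
      · rw [show 2 * k + 2 = 2 * (k + 1) by ring, pow_mul]
        positivity
      · positivity
  have htx : t = x * p := by rw [hxdef, div_mul_cancel₀ _ hp'.ne']
  -- each row (fixed k) sums to the S-summand
  have hrow : ∀ k : ℕ, HasSum (fun n => a k n)
      ((riemannZeta (2 * k + 2)).re * t ^ (2 * k + 2) / (p : ℝ) ^ (2 * k + 1)) := by
    intro k
    have hsumk : Summable (fun n : ℕ => 1 / (n : ℝ) ^ (2 * k + 2)) :=
      summable_one_div_nat_pow.mpr (by omega)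
    have := hsumk.hasSum.mul_right (t ^ (2 * k + 2) / (p : ℝ) ^ (2 * k + 1))
    rw [zeta_re_eq, mul_div_assoc]
    exact this
  -- summability of rows' sums
  have hrowsum : Summable (fun k : ℕ =>
      (riemannZeta (2 * k + 2)).re * t ^ (2 * k + 2) / (p : ℝ) ^ (2 * k + 1)) := by
    set C : ℝ := ∑' n : ℕ, 1 / (n : ℝ) ^ 2 with hC
    have hC0 : 0 ≤ C := tsum_nonneg (fun n => by positivity)
    apply Summable.of_nonneg_of_le (fun k => ?_) (fun k => ?_)
      (((summable_geometric_of_lt_one hx2' hx2).mul_left (C * p * x ^ 2)))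
    · have h0 : 0 ≤ (riemannZeta (2 * k + 2)).re := by
        rw [zeta_re_eq]; exact tsum_nonneg (fun n => by positivity)
      apply div_nonneg
      apply mul_nonneg h0
      · rw [show 2 * k + 2 = 2 * (k + 1) by ring, pow_mul]; positivity
      · positivity
    · have hb : t ^ (2 * k + 2) / (p : ℝ) ^ (2 * k + 1) = p * x ^ (2 * k + 2) := by
        rw [htx, mul_pow]
        field_simp
        ring
      rw [mul_div_assoc, hb]
      have h1 : (riemannZeta (2 * k + 2)).re ≤ C := zeta_re_le k
      have h2 : x ^ (2 * k + 2) = x ^ 2 * (x ^ 2) ^ k := by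
        rw [← pow_mul, ← pow_add]; ring_nf
      have h0 : 0 ≤ (riemannZeta (2 * k + 2)).re := by
        rw [zeta_re_eq]; exact tsum_nonneg (fun n => by positivity)
      have h3 : 0 ≤ p * x ^ (2 * k + 2) := by
        rw [h2]; positivity
      calc (riemannZeta (2 * k + 2)).re * (p * x ^ (2 * k + 2))
          ≤ C * (p * x ^ (2 * k + 2)) := by
            apply mul_le_mul_of_nonneg_right h1 h3
        _ = C * p * x ^ 2 * (x ^ 2) ^ k := by rw [h2]; ring
  have hunc : Summable (Function.uncurry fun k n => a k n) := by
    refine (summable_prod_of_nonneg (fun q => hanonneg q.1 q.2)).mpr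
      ⟨fun k => (hrow k).summable, ?_⟩
    apply hrowsum.congr
    intro k
    exact ((hrow k).tsum_eq).symm
  -- columns (fixed n)
  have hcol : ∀ n : ℕ, HasSum (fun k => a k (n + 1))
      ((p : ℝ) * (x ^ 2 / (((n : ℝ) + 1) ^ 2 - x ^ 2))) := by
    intro n
    have hn1 : (0 : ℝ) < (n : ℝ) + 1 := by positivity
    set r : ℝ := (x / ((n : ℝ) + 1)) ^ 2 with hr
    have hr0 : 0 ≤ r := sq_nonneg _
    have hr1 : r < 1 := by
      rw [hr, div_pow]
      rw [div_lt_one (by positivity)]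
      have : (1:ℝ) ≤ ((n:ℝ)+1) ^ 2 := by nlinarith
      linarith
    have hgeo := (hasSum_geometric_of_lt_one hr0 hr1).mul_left ((p : ℝ) * r)
    have hval : (p : ℝ) * r * (1 - r)⁻¹ = (p : ℝ) * (x ^ 2 / (((n : ℝ) + 1) ^ 2 - x ^ 2)) := by
      rw [hr]
      have hd := denom_pos hx n
      field_simp
    rw [hval] at hgeo
    refine hgeo.congr_fun fun k => ?_
    rw [ha]
    simp only
    rw [htx]
    have hcast : ((n + 1 : ℕ) : ℝ) = (n : ℝ) + 1 := by push_cast; ring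
    rw [hcast, hr]
    rw [mul_pow, ← pow_mul]
    simp only [div_pow]
    field_simp
    ring
  -- now swap
  have hswap : (∑' n : ℕ, ∑' k : ℕ, a k n) = ∑' k : ℕ, ∑' n : ℕ, a k n :=
    Summable.tsum_comm' hunc (fun k => (hrow k).summable)
      (fun n => by
        rcases n with _ | m
        · apply summable_zero.congr
          intro k
          simp [ha]
        · exact (hcol m).summable)
  have hGsum : Summable (fun n : ℕ => ∑' k : ℕ, a k n) := by
    have hswapped : Summable (fun q : ℕ × ℕ => a q.2 q.1) := by
      have h := hunc.prod_symm
      exact h.congr fun q => rfl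
    exact ((summable_prod_of_nonneg (fun q => hanonneg q.2 q.1)).mp hswapped).2
  have hS : S p t = ∑' k : ℕ, ∑' n : ℕ, a k n := by
    rw [S]
    exact tsum_congr fun k => ((hrow k).tsum_eq).symm
  have hG0 : (∑' k : ℕ, a k 0) = 0 := by
    have h0 : ∀ k, a k 0 = 0 := fun k => by simp [ha]
    rw [tsum_congr h0, tsum_zero]
  calc S p t = ∑' k : ℕ, ∑' n : ℕ, a k n := hS
    _ = ∑' n : ℕ, ∑' k : ℕ, a k n := hswap.symm
    _ = (∑' k : ℕ, a k 0) + ∑' n : ℕ, ∑' k : ℕ, a k (n + 1) := Summable.tsum_eq_zero_add hGsum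
    _ = ∑' n : ℕ, (p : ℝ) * (x ^ 2 / (((n : ℝ) + 1) ^ 2 - x ^ 2)) := by
        rw [hG0, zero_add]
        exact tsum_congr fun n => (hcol n).tsum_eq
    _ = (p : ℝ) * Faux x := by
        rw [Faux]
        exact tsum_mul_left

theorem stmt0 (p : ℕ) (hp : p.Prime) (t : ℝ) (ht : |t| < (p : ℝ)) :
    D p t ≠ 0 ∧
      Complex.exp (-(2 * Real.pi * Complex.I * t) / p) =
        ((1 - 2 * Real.pi ^ 2 * t ^ 2 / D p t : ℝ) : ℂ) +
          Complex.I * ((2 * Real.pi * t * (2 * S p t - p) / D p t : ℝ) : ℂ) := by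
  have hppos : 0 < p := hp.pos
  have hp' : (0 : ℝ) < p := by exact_mod_cast hppos
  rcases eq_or_ne t 0 with rfl | ht0
  · have hS0 : S p 0 = 0 := by
      have h0 : ∀ k : ℕ, (riemannZeta (2 * k + 2)).re * (0:ℝ) ^ (2 * k + 2) / (p : ℝ) ^ (2 * k + 1)
          = 0 := by
        intro k
        rw [zero_pow (by omega)]
        ring
      rw [S, tsum_congr h0, tsum_zero]
    have hD : D p 0 = (p : ℝ) ^ 2 := by
      rw [D, hS0]
      ring
    constructor
    · rw [hD]; positivity
    · rw [hD, hS0]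
      norm_num
  · obtain ⟨x, hxdef⟩ : ∃ x : ℝ, x = t / p := ⟨t / p, rfl⟩
    have hx : |x| < 1 := by
      rw [hxdef, abs_div, abs_of_pos hp', div_lt_one hp']
      exact ht
    have hx0 : x ≠ 0 := by rw [hxdef]; exact div_ne_zero ht0 hp'.ne'
    have htx : t = x * p := by rw [hxdef, div_mul_cancel₀ _ hp'.ne']
    have hsx : Real.sin (π * x) ≠ 0 := by
      intro h
      obtain ⟨n, hn⟩ := Real.sin_eq_zero_iff.mp h
      exact ne_int hx0 hx n (mul_left_cancel₀ Real.pi_ne_zero (by rw [← hn]; ring)).symm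
    have hkey := key_cot hx
    have hSeq : S p t = (p : ℝ) * Faux x := by rw [hxdef]; exact S_eq hppos ht
    have hmain : Real.sin (π * x) * ((p : ℝ) - 2 * S p t) = π * t * Real.cos (π * x) := by
      rw [hSeq, htx]
      linear_combination (-(p : ℝ)) * hkey
    have hDs : D p t * Real.sin (π * x) ^ 2 = (π * t) ^ 2 := by
      rw [D]
      have h2 := Real.sin_sq_add_cos_sq (π * x)
      linear_combination (Real.sin (π * x) * ((p : ℝ) - 2 * S p t) + π * t * Real.cos (π * x))
        * hmain + (π * t) ^ 2 * h2
    have hπt : π * t ≠ 0 := mul_ne_zero Real.pi_ne_zero ht0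
    have hD0 : D p t ≠ 0 := by
      intro h
      have h2 : (π * t) ^ 2 = 0 := by rw [← hDs, h]; ring
      exact hπt (pow_eq_zero_iff (by norm_num) |>.mp h2)
    refine ⟨hD0, ?_⟩
    have hre : 1 - 2 * π ^ 2 * t ^ 2 / D p t = Real.cos (2 * (π * x)) := by
      have h2 : 2 * π ^ 2 * t ^ 2 / D p t = 2 * Real.sin (π * x) ^ 2 := by
        rw [div_eq_iff hD0]
        linear_combination (-2 : ℝ) * hDs
      rw [h2, Real.cos_two_mul]
      have h3 := Real.sin_sq_add_cos_sq (π * x)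
      linarith
    have him : 2 * π * t * (2 * S p t - (p : ℝ)) / D p t = -Real.sin (2 * (π * x)) := by
      rw [div_eq_iff hD0, Real.sin_two_mul]
      apply mul_left_cancel₀ hsx
      linear_combination (-2 * π * t) * hmain + 2 * Real.cos (π * x) * hDs
    have hlhs : -(2 * (π : ℂ) * Complex.I * t) / p = ((-(2 * (π * x)) : ℝ) : ℂ) * Complex.I := by
      have hpc : ((p : ℕ) : ℂ) ≠ 0 := by exact_mod_cast hp'.ne'
      rw [div_eq_iff hpc, hxdef]
      push_cast
      field_simp
    rw [hlhs, Complex.exp_mul_I, ← Complex.ofReal_cos, ← Complex.ofReal_sin,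
      Real.cos_neg, Real.sin_neg, hre, him]
    push_cast
    ring
end

section
/- Let p be a prime and t a real number with |t| < p. Define S(t) = ∑_{n odd, n≥1} ζ(n+1) t^{n+1}/p^n, S̄(t) = ∑_{n odd, n≥3} ζ(n) t^{n−1}/p^n and B₁(t) = ∑_{n≥1} 1/(n(1 + t/p + n)). Then S(t) − p·t·S̄(t) = t ( −p/(t + p) + (1 + t/p) B₁(t) ). -/
open Filter Topology

private lemma sumInvSq : Summable (fun j : ℕ => (1 / ((j:ℝ)+1))^2) := by
  have h : Summable (fun n : ℕ => 1 / (n:ℝ)^2) :=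
    Real.summable_one_div_nat_pow.mpr one_lt_two
  have h2 := (summable_nat_add_iff 1).mpr h
  refine h2.congr fun j => ?_
  push_cast
  rw [div_pow]
  norm_num

private lemma telescope (x : ℝ) (hx : -1 < x) :
    HasSum (fun j : ℕ => 1 / (((j:ℝ)+1+x) * ((j:ℝ)+2+x))) (1/(1+x)) := by
  have hpos : ∀ j : ℕ, (0:ℝ) < (j:ℝ)+1+x := by
    intro j
    have : (0:ℝ) ≤ j := Nat.cast_nonneg j
    linarith
  have hpos2 : ∀ j : ℕ, (0:ℝ) < (j:ℝ)+2+x := by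
    intro j
    have := hpos j
    linarith
  have hnn : ∀ j : ℕ, 0 ≤ 1 / (((j:ℝ)+1+x) * ((j:ℝ)+2+x)) := fun j =>
    le_of_lt (div_pos one_pos (mul_pos (hpos j) (hpos2 j)))
  rw [hasSum_iff_tendsto_nat_of_nonneg hnn]
  have heq : ∀ n : ℕ, ∑ i ∈ Finset.range n, 1 / (((i:ℝ)+1+x) * ((i:ℝ)+2+x))
      = 1/(1+x) - 1/((n:ℝ)+1+x) := by
    intro n
    have hterm : ∀ i : ℕ, 1 / (((i:ℝ)+1+x) * ((i:ℝ)+2+x))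
        = (fun i : ℕ => 1/((i:ℝ)+1+x)) i - (fun i : ℕ => 1/((i:ℝ)+1+x)) (i+1) := by
      intro i
      have h1 := (hpos i).ne'
      have h2 := (hpos2 i).ne'
      have h2' : ((i:ℝ)+1)+1+x ≠ 0 := by push_cast at h2; intro h; apply h2; linarith
      simp only []
      push_cast
      field_simp
      ring_nf
    rw [Finset.sum_congr rfl fun i _ => hterm i,
      Finset.sum_range_sub' (fun i : ℕ => 1/((i:ℝ)+1+x)) n]
    norm_num
  simp only [heq]
  have hto : Tendsto (fun n : ℕ => ((n:ℝ)+1+x)) atTop atTop := by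
    apply tendsto_atTop_add_const_right
    apply tendsto_atTop_add_const_right
    exact tendsto_natCast_atTop_atTop
  have h0 : Tendsto (fun n : ℕ => 1/((n:ℝ)+1+x)) atTop (𝓝 0) := by
    have := hto.inv_tendsto_atTop
    simp only [one_div]
    exact this
  simpa using tendsto_const_nhds.sub h0

private lemma zetaRe (m : ℕ) (hm : 2 ≤ m) :
    (riemannZeta m).re = ∑' j : ℕ, 1 / ((j:ℝ)+1) ^ m := by
  have h1 : 1 < ((m : ℂ)).re := by
    simp only [Complex.natCast_re]
    exact_mod_cast lt_of_lt_of_le one_lt_two hm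
  rw [zeta_eq_tsum_one_div_nat_add_one_cpow h1]
  have h2 : ∀ j : ℕ, (1 / ((j:ℂ)+1) ^ (m:ℂ)) = (((1 / ((j:ℝ)+1) ^ m : ℝ)) : ℂ) := by
    intro j
    rw [Complex.cpow_natCast]
    push_cast
    ring
  rw [tsum_congr h2, ← Complex.ofReal_tsum, Complex.ofReal_re]

private lemma innerGeom (y : ℝ) (hy : |y| < 1) :
    ∑' k : ℕ, (y ^ (2*k+2) - y ^ (2*k+3)) = y^2 / (1+y) := by
  obtain ⟨hy1, hy2⟩ := abs_lt.mp hy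
  have h : ∀ k : ℕ, y^(2*k+2) - y^(2*k+3) = (y^2-y^3) * (y^2)^k := by
    intro k; rw [← pow_mul]; ring
  have hnorm : ‖y^2‖ < 1 := by
    rw [Real.norm_eq_abs, abs_pow]
    exact pow_lt_one₀ (abs_nonneg y) hy two_ne_zero
  rw [tsum_congr h, tsum_mul_left, tsum_geometric_of_norm_lt_one hnorm]
  have h2 : (1:ℝ) + y ≠ 0 := by intro h; linarith
  have h3 : (1:ℝ) - y^2 ≠ 0 := by nlinarith
  field_simp
  ring

set_option maxHeartbeats 1000000 in
private lemma summable_shift (a : ℝ) (ha : -1 < a) :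
    Summable (fun j : ℕ => 1 / (((j:ℝ)+1) * ((j:ℝ)+1+a))) := by
  have hm0 : 0 < min (1+a) 1 := lt_min (by linarith) one_pos
  set m : ℝ := min (1+a) 1 with hm
  have hle : ∀ j : ℕ, m * ((j:ℝ)+1) ≤ (j:ℝ)+1+a := by
    intro j
    have hj : (0:ℝ) ≤ j := Nat.cast_nonneg j
    rcases le_total a 0 with h | h
    · have h1 : m ≤ 1+a := min_le_left _ _
      have h2 : m * ((j:ℝ)+1) ≤ (1+a) * ((j:ℝ)+1) := by
        apply mul_le_mul_of_nonneg_right h1; linarith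
      nlinarith
    · have h1 : m ≤ 1 := min_le_right _ _
      have h2 : m * ((j:ℝ)+1) ≤ 1 * ((j:ℝ)+1) := by
        apply mul_le_mul_of_nonneg_right h1; linarith
      linarith
  have hpos : ∀ j : ℕ, (0:ℝ) < (j:ℝ)+1+a := by
    intro j
    have hj : (0:ℝ) < (j:ℝ)+1 := by positivity
    have := hle j
    nlinarith
  refine Summable.of_nonneg_of_le ?_ ?_ (sumInvSq.mul_left (1/m))
  · intro j
    have hj : (0:ℝ) < (j:ℝ)+1 := by positivity
    exact le_of_lt (div_pos one_pos (mul_pos hj (hpos j)))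
  · intro j
    have hj : (0:ℝ) < (j:ℝ)+1 := by positivity
    have key : m * ((j:ℝ)+1)^2 ≤ ((j:ℝ)+1) * ((j:ℝ)+1+a) := by
      nlinarith [hle j]
    have h1 : (1/m) * (1/((j:ℝ)+1))^2 = 1 / (m * ((j:ℝ)+1)^2) := by
      rw [div_pow]
      field_simp
    rw [h1]
    exact one_div_le_one_div_of_le (by positivity) key

private lemma absPowLe (x : ℝ) (hx : |x| < 1) (j k : ℕ) :
    |x / ((j:ℝ)+1)| ^ (2*k+2) ≤ |x|^(2*k) * (1/((j:ℝ)+1))^2 := by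
  have hj : (0:ℝ) < (j:ℝ)+1 := by positivity
  have hj1 : (1:ℝ) ≤ (j:ℝ)+1 := by
    have : (0:ℝ) ≤ j := Nat.cast_nonneg j; linarith
  have h1 : |x/((j:ℝ)+1)| ≤ |x| := by
    rw [abs_div, abs_of_pos hj]
    exact div_le_self (abs_nonneg x) hj1
  have h2 : |x/((j:ℝ)+1)| ≤ 1/((j:ℝ)+1) := by
    rw [abs_div, abs_of_pos hj]
    gcongr
  calc |x/((j:ℝ)+1)|^(2*k+2) = |x/((j:ℝ)+1)|^(2*k) * |x/((j:ℝ)+1)|^2 := by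
        rw [← pow_add]
    _ ≤ |x|^(2*k) * (1/((j:ℝ)+1))^2 := by
        apply mul_le_mul (pow_le_pow_left₀ (abs_nonneg _) h1 _)
          (pow_le_pow_left₀ (abs_nonneg _) h2 _) (by positivity) (by positivity)

/-- `S̄(t) = ∑_{n odd, n ≥ 3} ζ(n) t^(n-1) / p^n` (sum over odd `n = 2k+3`). -/
noncomputable def Sbar (p : ℕ) (t : ℝ) : ℝ :=
  ∑' k : ℕ, (riemannZeta (2 * k + 3)).re * t ^ (2 * k + 2) / (p : ℝ) ^ (2 * k + 3)

/-- `B₁(t) = ∑_{n ≥ 1} 1 / (n (1 + t/p + n))`. -/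
noncomputable def B₁ (p : ℕ) (t : ℝ) : ℝ :=
  ∑' n : ℕ, 1 / (((n : ℝ) + 1) * (1 + t / p + ((n : ℝ) + 1)))

set_option maxHeartbeats 1000000 in
theorem stmt6 (p : ℕ) (hp : p.Prime) (t : ℝ) (ht : |t| < (p : ℝ)) :
    S p t - p * t * Sbar p t = t * (-(p : ℝ) / (t + (p : ℝ)) + (1 + t / p) * B₁ p t) := by
  have hp0 : (0:ℝ) < p := by exact_mod_cast hp.pos
  set x : ℝ := t / p with hxdef
  have hxabs : |x| < 1 := by
    rw [hxdef, abs_div, abs_of_pos hp0]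
    exact (div_lt_one hp0).mpr ht
  obtain ⟨hx1, hx2⟩ := abs_lt.mp hxabs
  have h1x : (0:ℝ) < 1 + x := by linarith
  have htx : t = x * p := by rw [hxdef]; field_simp
  set y : ℕ → ℝ := fun j => x / ((j:ℝ)+1) with hydef
  have hjpos : ∀ j : ℕ, (0:ℝ) < (j:ℝ)+1 := fun j => by positivity
  have hy : ∀ j : ℕ, |y j| < 1 := by
    intro j
    have h1 : |y j| ≤ |x| := by
      rw [hydef, abs_div, abs_of_pos (hjpos j)]
      refine div_le_self (abs_nonneg x) ?_
      have : (0:ℝ) ≤ j := Nat.cast_nonneg j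
      linarith
    exact lt_of_le_of_lt h1 hxabs
  have hjx : ∀ j : ℕ, (0:ℝ) < (j:ℝ)+1+x := by
    intro j
    have : (0:ℝ) ≤ j := Nat.cast_nonneg j
    linarith
  -- geometric summability
  have hxsq : |x|^2 < 1 := pow_lt_one₀ (abs_nonneg x) hxabs two_ne_zero
  have hgeo : Summable (fun k : ℕ => |x|^(2*k)) := by
    have h := summable_geometric_of_lt_one (by positivity : (0:ℝ) ≤ |x|^2) hxsq
    exact h.congr fun k => by rw [← pow_mul, mul_comm]
  -- summability of the double families
  have habs2 : ∀ k j : ℕ, |(p:ℝ) * y j ^ (2*k+2)| ≤ (p * |x|^(2*k)) * (1/((j:ℝ)+1))^2 := by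
    intro k j
    rw [abs_mul, abs_of_pos hp0, abs_pow, mul_assoc]
    refine mul_le_mul_of_nonneg_left ?_ hp0.le
    rw [← abs_pow]
    rw [abs_pow]
    exact absPowLe x hxabs j k
  have habs3 : ∀ k j : ℕ, |(p:ℝ) * y j ^ (2*k+3)| ≤ (p * |x|^(2*k)) * (1/((j:ℝ)+1))^2 := by
    intro k j
    rw [abs_mul, abs_of_pos hp0, abs_pow, mul_assoc]
    refine mul_le_mul_of_nonneg_left ?_ hp0.le
    calc |y j|^(2*k+3) = |y j|^(2*k+2) * |y j| := by rw [← pow_succ]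
      _ ≤ |y j|^(2*k+2) * 1 := by
          exact mul_le_mul_of_nonneg_left (hy j).le (by positivity)
      _ = |y j|^(2*k+2) := mul_one _
      _ ≤ |x|^(2*k) * (1/((j:ℝ)+1))^2 := by rw [← abs_pow, abs_pow]; exact absPowLe x hxabs j k
  have hmaj : Summable (fun q : ℕ × ℕ => ((p:ℝ) * |x|^(2*q.1)) * (1/((q.2:ℝ)+1))^2) := by
    refine Summable.mul_of_nonneg (hgeo.mul_left (p:ℝ)) sumInvSq ?_ ?_
    · intro k; positivity
    · intro j; positivity
  have hU : Summable (Function.uncurry fun k j : ℕ => (p:ℝ) * y j ^ (2*k+2)) := by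
    rw [← summable_abs_iff]
    refine Summable.of_nonneg_of_le (fun q => abs_nonneg _) ?_ hmaj
    exact fun q => habs2 q.1 q.2
  have hV : Summable (Function.uncurry fun k j : ℕ => (p:ℝ) * y j ^ (2*k+3)) := by
    rw [← summable_abs_iff]
    refine Summable.of_nonneg_of_le (fun q => abs_nonneg _) ?_ hmaj
    exact fun q => habs3 q.1 q.2
  have hW : Summable (Function.uncurry fun k j : ℕ =>
      (p:ℝ) * y j ^ (2*k+2) - (p:ℝ) * y j ^ (2*k+3)) := by
    have := hU.sub hV
    exact this.congr fun q => rfl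
  -- rewrite S
  have hS : S p t = ∑' k : ℕ, ∑' j : ℕ, (p:ℝ) * y j ^ (2*k+2) := by
    unfold S
    refine tsum_congr fun k => ?_
    rw [show ((2:ℂ) * (k:ℕ) + 2) = ((2*k+2 : ℕ) : ℂ) by push_cast; ring]
    rw [zetaRe (2*k+2) (by omega), mul_div_assoc, ← tsum_mul_right]
    refine tsum_congr fun j => ?_
    rw [hydef, htx]
    have h1 : ((j:ℝ)+1) ≠ 0 := (hjpos j).ne'
    have hp' : (p:ℝ) ≠ 0 := hp0.ne'
    simp only [div_pow, mul_pow]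
    field_simp
    ring
  have hSbar : (p:ℝ) * t * Sbar p t = ∑' k : ℕ, ∑' j : ℕ, (p:ℝ) * y j ^ (2*k+3) := by
    unfold Sbar
    rw [← tsum_mul_left]
    refine tsum_congr fun k => ?_
    rw [show ((2:ℂ) * (k:ℕ) + 3) = ((2*k+3 : ℕ) : ℂ) by push_cast; ring]
    rw [zetaRe (2*k+3) (by omega), mul_div_assoc, ← tsum_mul_right, ← tsum_mul_left]
    refine tsum_congr fun j => ?_
    rw [hydef, htx]
    have h1 : ((j:ℝ)+1) ≠ 0 := (hjpos j).ne'
    have hp' : (p:ℝ) ≠ 0 := hp0.ne'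
    simp only [div_pow, mul_pow]
    field_simp
    ring
  -- combine into one double sum and swap
  have hLHS : S p t - (p:ℝ) * t * Sbar p t
      = ∑' j : ℕ, ∑' k : ℕ, ((p:ℝ) * y j ^ (2*k+2) - (p:ℝ) * y j ^ (2*k+3)) := by
    rw [hS, hSbar, ← Summable.tsum_sub (f := fun k : ℕ => ∑' j : ℕ, (p:ℝ) * y j ^ (2*k+2))
      (g := fun k : ℕ => ∑' j : ℕ, (p:ℝ) * y j ^ (2*k+3)) hU.prod hV.prod]
    rw [Summable.tsum_comm (f := fun k j : ℕ => (p:ℝ) * y j ^ (2*k+2) - (p:ℝ) * y j ^ (2*k+3)) hW]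
    refine tsum_congr fun k => ?_
    exact (Summable.tsum_sub (hU.prod_factor k) (hV.prod_factor k)).symm
  -- evaluate the inner geometric sum
  have hInner : ∀ j : ℕ, ∑' k : ℕ, ((p:ℝ) * y j ^ (2*k+2) - (p:ℝ) * y j ^ (2*k+3))
      = (p:ℝ) * x^2 / (((j:ℝ)+1) * ((j:ℝ)+1+x)) := by
    intro j
    have h : ∀ k : ℕ, (p:ℝ) * y j ^ (2*k+2) - (p:ℝ) * y j ^ (2*k+3)
        = (p:ℝ) * (y j ^ (2*k+2) - y j ^ (2*k+3)) := fun k => by ring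
    rw [tsum_congr h, tsum_mul_left, innerGeom (y j) (hy j)]
    have h1 : ((j:ℝ)+1) ≠ 0 := (hjpos j).ne'
    have h2 : ((j:ℝ)+1+x) ≠ 0 := (hjx j).ne'
    have h3 : 1 + y j ≠ 0 := by
      have := (abs_lt.mp (hy j)).1
      intro h; linarith
    rw [hydef]
    field_simp
  -- summability of the resulting families
  have hF : Summable (fun j : ℕ => (p:ℝ) * x^2 / (((j:ℝ)+1) * ((j:ℝ)+1+x))) := by
    have := (summable_shift x hx1).mul_left ((p:ℝ) * x^2)
    exact this.congr fun j => by rw [mul_one_div, mul_div_assoc]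
  have hG0 : Summable (fun j : ℕ => 1 / (((j:ℝ)+1) * (1 + x + ((j:ℝ)+1)))) := by
    have := summable_shift (1+x) (by linarith)
    exact this.congr fun j => by ring_nf
  have hG : Summable (fun j : ℕ => (t * (1+x)) * (1 / (((j:ℝ)+1) * (1 + x + ((j:ℝ)+1))))) :=
    hG0.mul_left _
  -- telescoping sum
  have hT := telescope x hx1
  -- final computation
  have hB : B₁ p t = ∑' j : ℕ, 1 / (((j:ℝ)+1) * (1 + x + ((j:ℝ)+1))) := by
    unfold B₁
    rfl
  have hdiff : ∀ j : ℕ, (p:ℝ) * x^2 / (((j:ℝ)+1) * ((j:ℝ)+1+x))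
      - (t * (1+x)) * (1 / (((j:ℝ)+1) * (1 + x + ((j:ℝ)+1))))
      = (-((p:ℝ) * x)) * (1 / (((j:ℝ)+1+x) * ((j:ℝ)+2+x))) := by
    intro j
    have h1 : ((j:ℝ)+1) ≠ 0 := (hjpos j).ne'
    have h2 : ((j:ℝ)+1+x) ≠ 0 := (hjx j).ne'
    have h3 : (1 + x + ((j:ℝ)+1)) ≠ 0 := by
      have := hjx j; intro h; apply h2; linarith
    have h4 : ((j:ℝ)+2+x) ≠ 0 := by
      have := hjx j; intro h; apply h2; linarith
    rw [htx]
    field_simp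
    ring
  have hsub : (∑' j : ℕ, (p:ℝ) * x^2 / (((j:ℝ)+1) * ((j:ℝ)+1+x)))
      - (∑' j : ℕ, (t * (1+x)) * (1 / (((j:ℝ)+1) * (1 + x + ((j:ℝ)+1)))))
      = t * (-(p:ℝ) / (t + (p:ℝ))) := by
    rw [← Summable.tsum_sub hF hG, tsum_congr hdiff, tsum_mul_left, hT.tsum_eq]
    have hp' : (p:ℝ) ≠ 0 := hp0.ne'
    have h1x' : (1:ℝ) + x ≠ 0 := h1x.ne'
    have h6 : x * (p:ℝ) + p ≠ 0 := by
      have h7 : x * (p:ℝ) + p = p * (1+x) := by ring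
      rw [h7]
      exact (mul_pos hp0 h1x).ne'
    rw [htx]
    field_simp
    ring
    field_simp
    ring
  rw [hLHS, tsum_congr hInner]
  have hRHS : t * (-(p:ℝ) / (t + (p:ℝ)) + (1 + t/p) * B₁ p t)
      = t * (-(p:ℝ) / (t + (p:ℝ)))
        + ∑' j : ℕ, (t * (1+x)) * (1 / (((j:ℝ)+1) * (1 + x + ((j:ℝ)+1)))) := by
    rw [tsum_mul_left, hB, ← hxdef]
    ring
  rw [hRHS]
  linarith [hsub]
end
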